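/- The relation ∼ on GC formulas over variables V and constants Const defined by φ ∼ ψ iff ⌊φ⌋_K ≡ ⌊ψ⌋_K (logical equivalence of K-bounded approximations) is an equivalence relation with finitely many equivalence classes, and whenever φ ∼ ψ, the formulas φ and ψ are equisatisfiable. -/

import Mathlib

namespace GC

inductive GTerm (X : Type) where
  | var : X → GTerm X
  | const : ℤ → GTerm X

def GTerm.eval {X : Type} (α : X → ℤ) : GTerm X → ℤ
  | .var x => α x
  | .const c => c

def GTerm.constIn {X : Type} (S : Set ℤ) : GTerm X → Prop
  | .var _ => True
  | .const c => c ∈ S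

/-- A gap-order constraint `lhs - rhs ≥ gap` with `gap ∈ ℕ`. -/
structure GAtom (X : Type) where
  lhs : GTerm X
  rhs : GTerm X
  gap : ℕ

def GAtom.holds {X : Type} (α : X → ℤ) (a : GAtom X) : Prop :=
  a.lhs.eval α - a.rhs.eval α ≥ (a.gap : ℤ)

def GAtom.constIn {X : Type} (S : Set ℤ) (a : GAtom X) : Prop :=
  a.lhs.constIn S ∧ a.rhs.constIn S

/-- GC formulas: positive boolean combinations of gap-order constraints (and ⊤). -/
inductive GCF (X : Type) where
  | tru : GCF X
  | atom : GAtom X → GCF X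
  | and : GCF X → GCF X → GCF X
  | or : GCF X → GCF X → GCF X

def GCF.holds {X : Type} (α : X → ℤ) : GCF X → Prop
  | .tru => True
  | .atom a => a.holds α
  | .and f g => f.holds α ∧ g.holds α
  | .or f g => f.holds α ∨ g.holds α

def GCF.constIn {X : Type} (S : Set ℤ) : GCF X → Prop
  | .tru => True
  | .atom a => a.constIn S
  | .and f g => f.constIn S ∧ g.constIn S
  | .or f g => f.constIn S ∧ g.constIn S

/-- `K`-bounded approximation of a gap-order atom. -/
def GAtom.cutoff {X : Type} (K : ℕ) (a : GAtom X) : GAtom X :=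
  ⟨a.lhs, a.rhs, min a.gap K⟩

/-- `K`-bounded approximation: every atom `x - y ≥ k` with `k ≥ K` is
replaced by `x - y ≥ K`. -/
def GCF.cutoff {X : Type} (K : ℕ) : GCF X → GCF X
  | .tru => .tru
  | .atom a => .atom (a.cutoff K)
  | .and f g => .and (f.cutoff K) (g.cutoff K)
  | .or f g => .or (f.cutoff K) (g.cutoff K)

/-- Cutoff equivalence: `φ ∼ ψ` iff the `K`-bounded approximations are
logically equivalent. -/
def simK {X : Type} (K : ℕ) (φ ψ : GCF X) : Prop :=
  ∀ α : X → ℤ, (φ.cutoff K).holds α ↔ (ψ.cutoff K).holds α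

section Aux

variable {V : Type}

/-! ### Generic facts about cutoff and satisfiability -/

/-- Maximal gap appearing in a formula. -/
def maxGap : GCF V → ℕ
  | .tru => 0
  | .atom a => a.gap
  | .and f g => max (maxGap f) (maxGap g)
  | .or f g => max (maxGap f) (maxGap g)

lemma cutoff_holds_of_holds {K : ℕ} {φ : GCF V} {α : V → ℤ} (h : φ.holds α) :
    (φ.cutoff K).holds α := by
  induction φ with
  | tru => trivial
  | atom a =>
      simp only [GCF.holds, GCF.cutoff, GAtom.holds, GAtom.cutoff] at h ⊢
      have : ((min a.gap K : ℕ) : ℤ) ≤ (a.gap : ℤ) := by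
        exact_mod_cast Nat.min_le_left _ _
      linarith
  | and f g ihf ihg => exact ⟨ihf h.1, ihg h.2⟩
  | or f g ihf ihg => exact h.elim (fun h => .inl (ihf h)) (fun h => .inr (ihg h))

lemma eval_comp {f : ℤ → ℤ} {Const : Finset ℤ} (hfix : ∀ c ∈ Const, f c = c)
    {t : GTerm V} (ht : t.constIn ↑Const) (α : V → ℤ) :
    t.eval (fun x => f (α x)) = f (t.eval α) := by
  cases t with
  | var x => rfl
  | const c => exact (hfix c (Finset.mem_coe.mp ht)).symm

/-- Stretching lemma: a satisfying assignment of the cutoff can be stretched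
into a satisfying assignment of the original formula. -/
lemma stretch {Const : Finset ℤ} {K G : ℕ} {f : ℤ → ℤ}
    (hfix : ∀ c ∈ Const, f c = c)
    (hP1 : ∀ a b : ℤ, b ≤ a → a - b ≤ f a - f b)
    (hP2 : ∀ a b : ℤ, (K : ℤ) ≤ a - b → (G : ℤ) ≤ f a - f b) :
    ∀ φ : GCF V, φ.constIn ↑Const → maxGap φ ≤ G → ∀ α : V → ℤ,
      (φ.cutoff K).holds α → φ.holds (fun x => f (α x)) := by
  intro φ
  induction φ with
  | tru => intro _ _ _ _; trivial
  | atom a =>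
      intro hc hg α h
      simp only [GCF.holds, GCF.cutoff, GAtom.holds, GAtom.cutoff] at h ⊢
      rw [eval_comp hfix hc.1, eval_comp hfix hc.2]
      rcases le_or_gt a.gap K with hgk | hgk
      · have hmin : min a.gap K = a.gap := min_eq_left hgk
        rw [hmin] at h
        have hba : a.rhs.eval α ≤ a.lhs.eval α := by
          have : (0 : ℤ) ≤ (a.gap : ℤ) := Int.ofNat_nonneg _
          linarith
        have := hP1 _ _ hba
        linarith
      · have hmin : min a.gap K = K := min_eq_right hgk.le
        rw [hmin] at h
        have := hP2 _ _ h
        have hgG : (a.gap : ℤ) ≤ (G : ℤ) := by exact_mod_cast hg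
        linarith
  | and p q ihp ihq =>
      intro hc hg α h
      exact ⟨ihp hc.1 (le_trans (le_max_left _ _) hg) α h.1,
             ihq hc.2 (le_trans (le_max_right _ _) hg) α h.2⟩
  | or p q ihp ihq =>
      intro hc hg α h
      exact h.elim (fun h => .inl (ihp hc.1 (le_trans (le_max_left _ _) hg) α h))
                   (fun h => .inr (ihq hc.2 (le_trans (le_max_right _ _) hg) α h))

/-- Construction of a stretching map. -/
lemma exists_stretch (Const : Finset ℤ) (h0 : (0 : ℤ) ∈ Const) (K G : ℕ)
    (hG : 1 ≤ G)
    (hK : ∀ c ∈ Const, ∀ c' ∈ Const, (c - c').natAbs + 1 ≤ K) :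
    ∃ f : ℤ → ℤ, (∀ c ∈ Const, f c = c) ∧
      (∀ a b : ℤ, b ≤ a → a - b ≤ f a - f b) ∧
      (∀ a b : ℤ, (K : ℤ) ≤ a - b → (G : ℤ) ≤ f a - f b) := by
  have hne : Const.Nonempty := ⟨0, h0⟩
  set m := Const.min' hne with hm
  set M := Const.max' hne with hM
  have hmM : m ≤ M := Const.min'_le _ (Const.max'_mem hne)
  have hG' : (1 : ℤ) ≤ (G : ℤ) := by exact_mod_cast hG
  have hKmM : M - m + 1 ≤ (K : ℤ) := by
    have h1 := hK M (Const.max'_mem hne) m (Const.min'_mem hne)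
    have h2 : ((M - m).natAbs : ℤ) + 1 ≤ (K : ℤ) := by exact_mod_cast h1
    rwa [Int.natAbs_of_nonneg (sub_nonneg.2 hmM)] at h2
  refine ⟨fun n => if n < m then m + G * (n - m) else if n ≤ M then n
      else M + G * (n - M), ?_, ?_, ?_⟩
  · intro c hc
    simp only
    rw [if_neg (not_lt.2 (Const.min'_le c hc)), if_pos (Const.le_max' c hc)]
  · intro a b hba
    simp only
    split_ifs with h1 h2 h3 h3 h4 h3 h4 h3 h4 <;>
      nlinarith [mul_nonneg (sub_nonneg.2 hG') (sub_nonneg.2 hba),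
        mul_nonneg (sub_nonneg.2 hG') (sub_nonneg.2 hmM)]
  · intro a b hab
    have hK1 : (1 : ℤ) ≤ (K : ℤ) := by linarith
    have hG0 : (0 : ℤ) ≤ (G : ℤ) := by linarith
    simp only
    split_ifs with h1 h2 h3 h3 h4 h3 h4 h3 h4
    · nlinarith [mul_nonneg hG0 (by linarith : (0 : ℤ) ≤ a - b - 1)]
    · linarith
    · linarith
    · nlinarith [mul_nonneg hG0 (by linarith : (0 : ℤ) ≤ m - b - 1)]
    · linarith
    · linarith
    · nlinarith [mul_nonneg hG0 (by linarith : (0 : ℤ) ≤ a - M - 1),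
        mul_nonneg hG0 (by linarith : (0 : ℤ) ≤ m - b)]
    · nlinarith [mul_nonneg hG0 (by linarith : (0 : ℤ) ≤ a - M - 1)]
    · nlinarith [mul_nonneg hG0 (by linarith : (0 : ℤ) ≤ a - b - 1)]

/-- Equisatisfiability of a formula and its cutoff. -/
lemma sat_iff_cutoff_sat (Const : Finset ℤ) (h0 : (0 : ℤ) ∈ Const) (K : ℕ)
    (hK : ∀ c ∈ Const, ∀ c' ∈ Const, (c - c').natAbs + 1 ≤ K)
    (φ : GCF V) (hc : φ.constIn ↑Const) :
    (∃ α, φ.holds α) ↔ ∃ α, (φ.cutoff K).holds α := by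
  constructor
  · rintro ⟨α, h⟩; exact ⟨α, cutoff_holds_of_holds h⟩
  · rintro ⟨α, h⟩
    obtain ⟨f, hfix, hP1, hP2⟩ :=
      exists_stretch Const h0 K (maxGap φ + 1) (Nat.le_add_left _ _) hK
    exact ⟨fun x => f (α x), stretch hfix hP1 hP2 φ hc (Nat.le_succ _) α h⟩

/-! ### Finitely many classes: a DNF normal form over a finite atom set -/

variable [Fintype V] [DecidableEq V] (Const : Finset ℤ) (K : ℕ)

/-- Indices for the finitely many atoms of cutoff formulas. -/
abbrev Idx (V : Type) (Const : Finset ℤ) (K : ℕ) : Type :=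
  (V ⊕ ↥Const) × (V ⊕ ↥Const) × Fin (K + 1)

def toTerm : V ⊕ ↥Const → GTerm V
  | .inl x => .var x
  | .inr c => .const c

def idxAtom (i : Idx V Const K) : GAtom V := ⟨toTerm Const i.1, toTerm Const i.2.1, i.2.2⟩

def termIdx : GTerm V → Option (V ⊕ ↥Const)
  | .var x => some (.inl x)
  | .const c => if h : c ∈ Const then some (.inr ⟨c, h⟩) else none

lemma termIdx_some {t : GTerm V} (ht : t.constIn ↑Const) :
    ∃ s, termIdx Const t = some s ∧ toTerm Const s = t := by
  cases t with
  | var x => exact ⟨.inl x, rfl, rfl⟩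
  | const c =>
      have hc : c ∈ Const := Finset.mem_coe.mp ht
      exact ⟨.inr ⟨c, hc⟩, by simp [termIdx, hc], rfl⟩

def atomIdx (a : GAtom V) : Option (Idx V Const K) :=
  match termIdx Const a.lhs, termIdx Const a.rhs with
  | some s, some t => some (s, t, ⟨min a.gap K, by omega⟩)
  | _, _ => none

instance {X : Type} (α : X → ℤ) (a : GAtom X) : Decidable (a.holds α) :=
  inferInstanceAs (Decidable (a.lhs.eval α - a.rhs.eval α ≥ (a.gap : ℤ)))

/-- Boolean evaluation of a formula on an abstract valuation of atom indices. -/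
def interp (v : Idx V Const K → Bool) : GCF V → Bool
  | .tru => true
  | .atom a => ((atomIdx Const K a).map v).getD false
  | .and f g => interp v f && interp v g
  | .or f g => interp v f || interp v g

lemma interp_mono {v w : Idx V Const K → Bool}
    (hvw : ∀ i, v i = true → w i = true) :
    ∀ φ : GCF V, interp Const K v φ = true → interp Const K w φ = true := by
  intro φ
  induction φ with
  | tru => intro _; rfl
  | atom a =>
      intro h
      rcases h' : atomIdx Const K a with _ | i
      · simp [interp, h'] at h
      · simp only [interp, h', Option.map_some, Option.getD_some] at h ⊢
        exact hvw i h
  | and p q ihp ihq =>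
      intro h
      simp only [interp, Bool.and_eq_true] at h ⊢
      exact ⟨ihp h.1, ihq h.2⟩
  | or p q ihp ihq =>
      intro h
      simp only [interp, Bool.or_eq_true] at h ⊢
      exact h.elim (fun h => .inl (ihp h)) (fun h => .inr (ihq h))

lemma interp_decide (α : V → ℤ) :
    ∀ φ : GCF V, φ.constIn ↑Const →
      (interp Const K (fun i => decide ((idxAtom Const K i).holds α)) φ = true ↔
        (φ.cutoff K).holds α) := by
  intro φ
  induction φ with
  | tru => intro _; simp [interp, GCF.cutoff, GCF.holds]
  | atom a =>
      intro hc
      obtain ⟨s, hs, hes⟩ := termIdx_some Const hc.1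
      obtain ⟨t, ht, het⟩ := termIdx_some Const hc.2
      have hidx : atomIdx Const K a = some (s, t, ⟨min a.gap K, by omega⟩) := by
        simp [atomIdx, hs, ht]
      have hatom : idxAtom Const K (s, t, ⟨min a.gap K, by omega⟩) = a.cutoff K := by
        simp [idxAtom, GAtom.cutoff, hes, het]
      simp [interp, hidx, hatom, GCF.cutoff, GCF.holds]
  | and p q ihp ihq =>
      intro hc
      simp only [interp, Bool.and_eq_true, GCF.cutoff, GCF.holds]
      rw [ihp hc.1, ihq hc.2]
  | or p q ihp ihq =>
      intro hc
      simp only [interp, Bool.or_eq_true, GCF.cutoff, GCF.holds]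
      rw [ihp hc.1, ihq hc.2]

def andList : List (GAtom V) → GCF V
  | [] => .tru
  | a :: l => .and (.atom a) (andList l)

def orList : List (GCF V) → GCF V
  | [] => .atom ⟨.const 0, .const 1, 0⟩
  | f :: l => .or f (orList l)

lemma holds_andList (α : V → ℤ) :
    ∀ l : List (GAtom V), (andList (V := V) l).holds α ↔ ∀ a ∈ l, a.holds α := by
  intro l
  induction l with
  | nil => simp [andList, GCF.holds]
  | cons a l ih => simp [andList, GCF.holds, ih]

lemma holds_orList (α : V → ℤ) :
    ∀ l : List (GCF V), (orList l).holds α ↔ ∃ f ∈ l, f.holds α := by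
  intro l
  induction l with
  | nil =>
      simp only [orList, GCF.holds, GAtom.holds, GTerm.eval, List.not_mem_nil,
        false_and, exists_false, iff_false]
      norm_num
  | cons f l ih => simp [orList, GCF.holds, ih]

lemma cutoff_andList_idx :
    ∀ l : List (Idx V Const K),
      (andList (l.map (idxAtom Const K))).cutoff K = andList (l.map (idxAtom Const K)) := by
  intro l
  induction l with
  | nil => rfl
  | cons i l ih =>
      have hi : (idxAtom Const K i).cutoff K = idxAtom Const K i := by
        simp [idxAtom, GAtom.cutoff, min_eq_left (Nat.le_of_lt_succ i.2.2.isLt)]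
      simp [andList, GCF.cutoff, hi, ih]

lemma cutoff_orList {l : List (GCF V)} (h : ∀ f ∈ l, f.cutoff K = f) :
    (orList l).cutoff K = orList l := by
  induction l with
  | nil => simp [orList, GCF.cutoff, GAtom.cutoff]
  | cons f l ih =>
      simp only [orList, GCF.cutoff]
      rw [h f List.mem_cons_self, ih (fun g hg => h g (List.mem_cons_of_mem f hg))]

/-- Disjunctive normal form for a monotone boolean function on atom indices. -/
noncomputable def dnf (F : (Idx V Const K → Bool) → Bool) : GCF V :=
  orList (((Finset.univ.filter (fun v : Idx V Const K → Bool => F v = true)).toList).map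
    (fun v => andList (((Finset.univ.filter (fun i => v i = true)).toList).map
      (idxAtom Const K))))

lemma cutoff_dnf (F : (Idx V Const K → Bool) → Bool) :
    (dnf Const K F).cutoff K = dnf Const K F := by
  apply cutoff_orList
  intro f hf
  simp only [List.mem_map] at hf
  obtain ⟨v, _, rfl⟩ := hf
  exact cutoff_andList_idx Const K _

lemma holds_dnf (F : (Idx V Const K → Bool) → Bool) (α : V → ℤ) :
    (dnf Const K F).holds α ↔
      ∃ v, F v = true ∧ ∀ i, v i = true → (idxAtom Const K i).holds α := by
  simp only [dnf, holds_orList, List.mem_map, Finset.mem_toList, Finset.mem_filter,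
    Finset.mem_univ, true_and]
  constructor
  · rintro ⟨f, ⟨v, hv, rfl⟩, hh⟩
    refine ⟨v, hv, fun i hi => ?_⟩
    rw [holds_andList] at hh
    exact hh _ (List.mem_map_of_mem (by simp [hi]))
  · rintro ⟨v, hv, hh⟩
    refine ⟨_, ⟨v, hv, rfl⟩, ?_⟩
    rw [holds_andList]
    rintro a ha
    simp only [List.mem_map, Finset.mem_toList, Finset.mem_filter, Finset.mem_univ,
      true_and] at ha
    obtain ⟨i, hi, rfl⟩ := ha
    exact hh i hi

lemma simK_dnf (φ : GCF V) (hc : φ.constIn ↑Const) :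
    simK K φ (dnf Const K (fun v => interp Const K v φ)) := by
  intro α
  rw [cutoff_dnf, holds_dnf]
  constructor
  · intro h
    refine ⟨fun i => decide ((idxAtom Const K i).holds α),
      (interp_decide Const K α φ hc).mpr h, fun i hi => of_decide_eq_true hi⟩
  · rintro ⟨v, hv, hva⟩
    refine (interp_decide Const K α φ hc).mp ?_
    exact interp_mono Const K (fun i hi => decide_eq_true (hva i hi)) φ hv

end Aux

/-- The relation `∼` (equivalence of `K`-bounded
approximations) on GC formulas over the finite variable set `V` and constants
`Const` is an equivalence relation with finitely many equivalence classes,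
and `∼`-related formulas are equisatisfiable. -/
theorem gc_cutoff_equivalence_relation (V : Type) [Fintype V]
    (Const : Finset ℤ) (h0 : (0 : ℤ) ∈ Const)
    (K : ℕ) (hK : K = (Const ×ˢ Const).sup fun p => (p.1 - p.2).natAbs + 1) :
    Equivalence (simK (X := V) K) ∧
    (∃ S : Set (GCF V), S.Finite ∧
      ∀ φ : GCF V, φ.constIn ↑Const → ∃ ψ ∈ S, simK K φ ψ) ∧
    (∀ φ ψ : GCF V, φ.constIn ↑Const → ψ.constIn ↑Const → simK K φ ψ →
      ((∃ α, φ.holds α) ↔ (∃ α, ψ.holds α))) := by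
  have hK' : ∀ c ∈ Const, ∀ c' ∈ Const, (c - c').natAbs + 1 ≤ K := by
    intro c hc c' hc'
    rw [hK]
    have hmem : (c, c') ∈ Const ×ˢ Const := Finset.mem_product.2 ⟨hc, hc'⟩
    exact Finset.le_sup (f := fun p : ℤ × ℤ => (p.1 - p.2).natAbs + 1) hmem
  refine ⟨⟨fun φ α => Iff.rfl, fun h α => (h α).symm,
    fun h1 h2 α => (h1 α).trans (h2 α)⟩, ?_, ?_⟩
  · letI := Classical.decEq V
    refine ⟨Set.range (dnf Const K), Set.finite_range _, fun φ hφ => ?_⟩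
    exact ⟨dnf Const K (fun v => interp Const K v φ), ⟨_, rfl⟩, simK_dnf Const K φ hφ⟩
  · intro φ ψ hφ hψ hsim
    rw [sat_iff_cutoff_sat Const h0 K hK' φ hφ, sat_iff_cutoff_sat Const h0 K hK' ψ hψ]
    exact ⟨fun ⟨α, h⟩ => ⟨α, (hsim α).mp h⟩, fun ⟨α, h⟩ => ⟨α, (hsim α).mpr h⟩⟩

end GC
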